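/- For |q|<1 and ζ with |ζ|<1, ζ ≠ 1 (and denominators nonzero): ₂φ₁(q²,0;−q²;q²;ζ) = 1 + ζ/((1−ζ)(1+q²)) · R(ζ,−q²;q²), where R(α,β;Q) = Σ_{n≥0} (αβ)^n Q^{n²}/((αQ;Q)_n (βQ;Q)_n). -/

import Mathlib

open Complex

/-- The q-Pochhammer symbol `(a;q)_n = ∏_{j=0}^{n-1} (1 - a q^j)`. -/
noncomputable def qPoch (a q : ℂ) (n : ℕ) : ℂ := ∏ j ∈ Finset.range n, (1 - a * q ^ j)

/-- The universal mock theta function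
`R(α,β;Q) = Σ_{n≥0} (αβ)^n Q^{n²}/((αQ;Q)_n (βQ;Q)_n)`. -/
noncomputable def univR (α β Q : ℂ) : ℂ :=
  ∑' n : ℕ, (α * β) ^ n * Q ^ (n ^ 2) / (qPoch (α * Q) Q n * qPoch (β * Q) Q n)


section Aux
open Finset

noncomputable def gb (Q : ℂ) : ℕ → ℕ → ℂ
  | _, 0 => 1
  | 0, _ + 1 => 0
  | m + 1, n + 1 => gb Q m n + Q ^ (n + 1) * gb Q m (n + 1)

@[simp] lemma gb_zero (Q : ℂ) (m : ℕ) : gb Q m 0 = 1 := by cases m <;> rfl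

@[simp] lemma gb_zero_succ (Q : ℂ) (n : ℕ) : gb Q 0 (n + 1) = 0 := rfl

lemma gb_succ (Q : ℂ) (m n : ℕ) :
    gb Q (m + 1) (n + 1) = gb Q m n + Q ^ (n + 1) * gb Q m (n + 1) := rfl

lemma gb_eq_zero (Q : ℂ) : ∀ m n : ℕ, m < n → gb Q m n = 0 := by
  intro m
  induction m with
  | zero => intro n hn; match n, hn with | n + 1, _ => rfl
  | succ m ih =>
    intro n hn
    match n, hn with
    | n + 1, hn =>
      rw [gb_succ, ih n (by omega), ih (n + 1) (by omega)]
      ring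

lemma norm_gb_le_choose (Q : ℂ) (hQ : ‖Q‖ ≤ 1) : ∀ m n : ℕ, ‖gb Q m n‖ ≤ m.choose n := by
  intro m
  induction m with
  | zero =>
    intro n; cases n with
    | zero => simp
    | succ n => simp [gb_zero_succ]
  | succ m ih =>
    intro n; cases n with
    | zero => simp
    | succ n =>
      rw [gb_succ, Nat.choose_succ_succ]
      push_cast
      refine (norm_add_le _ _).trans (add_le_add (ih n) ?_)
      rw [norm_mul, norm_pow]
      calc ‖Q‖ ^ (n+1) * ‖gb Q m (n+1)‖ ≤ 1 * (m.choose (n+1) : ℝ) :=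
            mul_le_mul (pow_le_one₀ (norm_nonneg _) hQ) (ih (n+1))
              (norm_nonneg _) zero_le_one
        _ = (m.choose (n+1) : ℝ) := one_mul _

@[simp] lemma qPoch_zero (a q : ℂ) : qPoch a q 0 = 1 := by simp [qPoch]

lemma qPoch_succ (a q : ℂ) (n : ℕ) : qPoch a q (n + 1) = qPoch a q n * (1 - a * q ^ n) :=
  Finset.prod_range_succ _ _

lemma qPoch_succ' (a q : ℂ) (n : ℕ) : qPoch a q (n + 1) = (1 - a) * qPoch (a * q) q n := by
  rw [qPoch, Finset.prod_range_succ']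
  simp only [pow_zero, mul_one, pow_succ']
  rw [mul_comm]
  congr 1
  exact Finset.prod_congr rfl fun j _ => by ring_nf

lemma qPoch_add (a q : ℂ) (j k : ℕ) :
    qPoch a q (j + k) = qPoch a q j * qPoch (a * q ^ j) q k := by
  rw [qPoch, Finset.prod_range_add]
  congr 1
  exact Finset.prod_congr rfl fun i _ => by rw [mul_assoc, ← pow_add]

/-- The key finite identity, in polynomial (denominator-cleared) form. -/
lemma finite_identity (Q : ℂ) : ∀ m : ℕ, ∀ b : ℂ,
    ∑ n ∈ range (m + 1),
      b ^ n * Q ^ (n * (n + 1)) * gb Q m n * qPoch (b * Q ^ (n + 2)) Q (m - n) = 1 := by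
  intro m
  induction m with
  | zero => intro b; simp
  | succ m ih =>
    intro b
    set f : ℕ → ℂ := fun n =>
      b ^ n * Q ^ (n * (n + 1)) * gb Q (m+1) n * qPoch (b * Q ^ (n + 2)) Q (m + 1 - n) with hf
    set g : ℕ → ℂ := fun n =>
      (b*Q) ^ n * Q ^ (n * (n + 1)) * gb Q m n * qPoch ((b*Q) * Q ^ (n + 2)) Q (m - n) with hg
    set h : ℕ → ℂ := fun n => b * Q ^ (n + 2) * g n with hh
    have hgm1 : g (m + 1) = 0 := by
      simp only [hg, gb_eq_zero Q m (m+1) (Nat.lt_succ_self m)]; ring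
    have key : ∀ n ∈ range (m + 1), f (n + 1) = g (n + 1) + (h n - h (n + 1)) := by
      intro n hn
      rw [mem_range] at hn
      simp only [hf, hg, hh]
      have e1 : m + 1 - (n + 1) = m - n := by omega
      rw [e1, gb_succ]
      have e2 : (b*Q) * Q ^ (n+2) = b * Q ^ (n+3) := by ring
      have e3 : (b*Q) * Q ^ (n+1+2) = b * Q ^ (n+4) := by ring
      rw [e2, e3]
      rcases eq_or_lt_of_le (Nat.lt_succ_iff.mp hn) with hnm | hnm
      · subst hnm
        rw [gb_eq_zero Q n (n+1) (by omega), Nat.sub_self,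
          show n - (n+1) = 0 by omega]
        simp only [qPoch_zero, mul_one, mul_zero, add_zero, zero_mul, sub_zero]
        ring
      · have h1 : m - n = (m - (n+1)) + 1 := by omega
        rw [h1, qPoch_succ' (b * Q ^ (n+3)) Q]
        rw [show b * Q ^ (n+3) * Q = b * Q ^ (n+4) by ring]
        ring
    have step1 : ∑ n ∈ range (m + 2), f n = ∑ n ∈ range (m + 1), f (n + 1) + f 0 :=
      Finset.sum_range_succ' f (m + 1)
    have step2 : ∑ n ∈ range (m + 1), f (n + 1)
        = ∑ n ∈ range (m + 1), g (n + 1) + (h 0 - h (m + 1)) := by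
      rw [Finset.sum_congr rfl key, Finset.sum_add_distrib, Finset.sum_range_sub' h]
    have step3 : ∑ n ∈ range (m + 1), g (n + 1) = ∑ n ∈ range (m + 1), g n - g 0 := by
      have h1 := Finset.sum_range_succ' g (m + 1)
      have h2 := Finset.sum_range_succ g (m + 1)
      rw [h2] at h1
      rw [hgm1] at h1
      linear_combination -h1
    have hsum_g : ∑ n ∈ range (m + 1), g n = 1 := ih (b * Q)
    have hf0 : f 0 + h 0 = g 0 := by
      simp only [hf, hg, hh]
      simp only [pow_zero, one_mul, gb_zero, Nat.sub_zero, Nat.zero_mul, mul_one]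
      rw [qPoch_succ' (b * Q ^ 2) Q m, show b * Q ^ 2 * Q = b * Q * Q ^ (0 + 2) by ring,
        show b * Q * Q ^ 2 = b * Q * Q ^ (0 + 2) by ring]
      ring
    have hhm1 : h (m + 1) = 0 := by rw [hh]; simp only [hgm1]; ring
    calc (range (m + 1 + 1)).sum f = ∑ n ∈ range (m + 2), f n := rfl
      _ = ∑ n ∈ range (m + 1), f (n + 1) + f 0 := step1
      _ = (∑ n ∈ range (m + 1), g n - g 0 + (h 0 - h (m + 1))) + f 0 := by
          rw [step2, step3]
      _ = 1 := by rw [hsum_g, hhm1, ← hf0]; ring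

lemma finite_identity_div (Q b : ℂ) (hb : ∀ k : ℕ, qPoch (b * Q) Q k ≠ 0) (m : ℕ) :
    ∑ n ∈ range (m + 1), b ^ n * Q ^ (n * (n + 1)) * gb Q m n / qPoch (b * Q) Q (n + 1)
      = 1 / qPoch (b * Q) Q (m + 1) := by
  have key : ∀ n ∈ range (m + 1),
      b ^ n * Q ^ (n * (n + 1)) * gb Q m n / qPoch (b * Q) Q (n + 1)
        = b ^ n * Q ^ (n * (n + 1)) * gb Q m n * qPoch (b * Q ^ (n + 2)) Q (m - n) /
            qPoch (b * Q) Q (m + 1) := by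
    intro n hn
    rw [mem_range] at hn
    have e : (n + 1) + (m - n) = m + 1 := by omega
    have hadd := qPoch_add (b * Q) Q (n + 1) (m - n)
    rw [e, show b * Q * Q ^ (n + 1) = b * Q ^ (n + 2) by ring] at hadd
    have hP2 : qPoch (b * Q ^ (n + 2)) Q (m - n) ≠ 0 := by
      intro h0
      exact hb (m + 1) (by rw [hadd, h0, mul_zero])
    have hP1 : qPoch (b * Q) Q (n + 1) ≠ 0 := hb (n + 1)
    rw [hadd, div_eq_div_iff hP1 (mul_ne_zero hP1 hP2)]
    ring
  rw [Finset.sum_congr rfl key, ← Finset.sum_div, finite_identity]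

lemma hasSum_gb (Q ζ : ℂ) (hQ : ‖Q‖ ≤ 1) (hζ : ‖ζ‖ < 1)
    (hne : ∀ j : ℕ, 1 - ζ * Q ^ j ≠ 0) (n : ℕ) :
    HasSum (fun m => gb Q m n * ζ ^ (m + 1)) (ζ ^ (n + 1) / qPoch ζ Q (n + 1)) := by
  induction n with
  | zero =>
    simp only [gb_zero, one_mul]
    have h0 := (hasSum_geometric_of_norm_lt_one hζ).mul_left ζ
    have : qPoch ζ Q 1 = 1 - ζ := by simp [qPoch]
    rw [this, pow_one]
    have heq : (fun m : ℕ => ζ ^ (m + 1)) = fun m : ℕ => ζ * ζ ^ m := by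
      funext m; rw [pow_succ, mul_comm]
    rw [heq, div_eq_mul_inv]
    exact h0
  | succ n ih =>
    set T : ℕ → ℂ := fun m => gb Q m (n + 1) * ζ ^ (m + 1) with hT
    have hsumm : Summable T := by
      apply Summable.of_norm
      refine Summable.of_nonneg_of_le (f := fun m : ℕ => (m : ℝ) ^ (n + 1) * ‖ζ‖ ^ m)
        (fun m => norm_nonneg _) ?_ ?_
      · intro m
        rw [hT, norm_mul, norm_pow]
        calc ‖gb Q m (n+1)‖ * ‖ζ‖ ^ (m + 1)
            ≤ (m.choose (n+1) : ℝ) * ‖ζ‖ ^ m :=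
              mul_le_mul (norm_gb_le_choose Q hQ m (n+1))
                (by rw [pow_succ]; nlinarith [pow_nonneg (norm_nonneg ζ) m, norm_nonneg ζ,
                  pow_le_one₀ (norm_nonneg ζ) hζ.le (n := m)])
                (by positivity) (Nat.cast_nonneg _)
          _ ≤ (m : ℝ) ^ (n + 1) * ‖ζ‖ ^ m := by
              apply mul_le_mul_of_nonneg_right _ (by positivity)
              exact_mod_cast Nat.cast_le.mpr (Nat.choose_le_pow m (n+1))
      · exact summable_pow_mul_geometric_of_norm_lt_one (n + 1)
          (r := ‖ζ‖) (by rwa [Real.norm_eq_abs, _root_.abs_of_nonneg (norm_nonneg ζ)])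
    set S : ℂ := ∑' m, T m with hS
    have hT0 : T 0 = 0 := by simp [hT]
    have hrec : S = ζ * (ζ ^ (n + 1) / qPoch ζ Q (n + 1)) + Q ^ (n + 1) * ζ * S := by
      have h1 : S = T 0 + ∑' m, T (m + 1) := Summable.tsum_eq_zero_add hsumm
      have h2 : ∀ m : ℕ, T (m + 1)
          = ζ * (gb Q m n * ζ ^ (m + 1)) + (Q ^ (n + 1) * ζ) * T m := by
        intro m
        simp only [hT, gb_succ]
        ring
      have hs1 : Summable fun m => ζ * (gb Q m n * ζ ^ (m + 1)) :=
        (ih.summable).mul_left ζ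
      have hs2 : Summable fun m => (Q ^ (n + 1) * ζ) * T m := hsumm.mul_left _
      have h3 : ∑' m, T (m + 1)
          = ζ * (ζ ^ (n + 1) / qPoch ζ Q (n + 1)) + Q ^ (n + 1) * ζ * S := by
        rw [tsum_congr h2, Summable.tsum_add hs1 hs2, tsum_mul_left, tsum_mul_left, ih.tsum_eq, ← hS]
      calc S = T 0 + ∑' m, T (m + 1) := h1
        _ = ζ * (ζ ^ (n + 1) / qPoch ζ Q (n + 1)) + Q ^ (n + 1) * ζ * S := by
            rw [hT0, zero_add, h3]
    have hP : qPoch ζ Q (n + 2) = qPoch ζ Q (n + 1) * (1 - ζ * Q ^ (n + 1)) :=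
      qPoch_succ ζ Q (n + 1)
    have hPn : qPoch ζ Q (n + 1) ≠ 0 := by
      rw [qPoch]
      exact Finset.prod_ne_zero_iff.mpr fun j _ => hne j
    have hfact : (1 : ℂ) - ζ * Q ^ (n + 1) ≠ 0 := hne (n + 1)
    have hval : S = ζ ^ (n + 2) / qPoch ζ Q (n + 2) := by
      rw [hP, ← div_div, eq_div_iff hfact]
      linear_combination hrec
    rw [← hval]
    exact hsumm.hasSum

lemma gb_one : ∀ m n : ℕ, gb 1 m n = (m.choose n : ℂ) := by
  intro m
  induction m with
  | zero =>
    intro n; cases n with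
    | zero => simp
    | succ n => simp
  | succ m ih =>
    intro n; cases n with
    | zero => simp
    | succ n =>
      rw [gb_succ, ih n, ih (n + 1), Nat.choose_succ_succ]
      push_cast
      ring

lemma qPoch_one (a : ℂ) (k : ℕ) : qPoch a 1 k = (1 - a) ^ k := by
  simp [qPoch]

lemma hasSum_choose (x : ℝ) (h0 : 0 ≤ x) (h1 : x < 1) (n : ℕ) :
    HasSum (fun m : ℕ => (m.choose n : ℝ) * x ^ (m + 1)) (x ^ (n + 1) / (1 - x) ^ (n + 1)) := by
  have hx : ‖(x : ℂ)‖ < 1 := by rwa [Complex.norm_real, Real.norm_eq_abs, _root_.abs_of_nonneg h0]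
  have hne : ∀ j : ℕ, (1 : ℂ) - (x : ℂ) * 1 ^ j ≠ 0 := by
    intro j
    rw [one_pow, mul_one, sub_ne_zero]
    intro hh
    have : x = 1 := by exact_mod_cast hh.symm
    linarith
  have h := hasSum_gb 1 (x : ℂ) (by norm_num) hx hne n
  rw [qPoch_one] at h
  have heq : (fun m : ℕ => gb 1 m n * (x : ℂ) ^ (m + 1))
      = fun m : ℕ => (((m.choose n : ℝ) * x ^ (m + 1) : ℝ) : ℂ) := by
    funext m; rw [gb_one]; push_cast; ring
  rw [heq] at h
  have hval : ((x : ℂ)) ^ (n + 1) / (1 - (x : ℂ)) ^ (n + 1)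
      = ((x ^ (n + 1) / (1 - x) ^ (n + 1) : ℝ) : ℂ) := by push_cast; ring
  rw [hval] at h
  exact Complex.hasSum_ofReal.mp h

lemma one_sub_ne {w : ℂ} (h : ‖w‖ < 1) : 1 - w ≠ 0 := by
  rw [sub_ne_zero]
  intro hw
  rw [← hw] at h
  simp at h

lemma qPoch_ne_zero (a q : ℂ) (k : ℕ) (h : ∀ j : ℕ, 1 - a * q ^ j ≠ 0) :
    qPoch a q k ≠ 0 := by
  rw [qPoch]
  exact Finset.prod_ne_zero_iff.mpr fun j _ => h j

lemma norm_qPoch_ge (a q : ℂ) (k : ℕ) (r : ℝ) (h : ∀ j : ℕ, ‖a * q ^ j‖ ≤ r) (hr : r ≤ 1) :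
    (1 - r) ^ k ≤ ‖qPoch a q k‖ := by
  rw [qPoch, norm_prod]
  calc (1 - r) ^ k = ∏ _j ∈ Finset.range k, (1 - r) := by rw [Finset.prod_const, Finset.card_range]
    _ ≤ ∏ j ∈ Finset.range k, ‖1 - a * q ^ j‖ := by
        apply Finset.prod_le_prod (fun j _ => by linarith) (fun j _ => ?_)
        calc 1 - r ≤ 1 - ‖a * q ^ j‖ := by linarith [h j]
          _ = ‖(1 : ℂ)‖ - ‖a * q ^ j‖ := by rw [norm_one]
          _ ≤ ‖1 - a * q ^ j‖ := norm_sub_norm_le _ _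


end Aux

set_option maxHeartbeats 2000000 in
/-- `₂φ₁(q²,0;−q²;q²;ζ) = 1 + ζ/((1−ζ)(1+q²)) · R(ζ,−q²;q²)`. -/
theorem twoPhiOne_eq_R_neg_qsq (q ζ : ℂ) (hq0 : 0 < ‖q‖) (hq1 : ‖q‖ < 1)
    (hζ : ‖ζ‖ < 1) (hζ1 : ζ ≠ 1) (hζq : ∀ m : ℕ, ζ * q ^ (2 * m) ≠ 1) :
    ∑' n : ℕ, qPoch (q ^ 2) (q ^ 2) n /
        (qPoch (-q ^ 2) (q ^ 2) n * qPoch (q ^ 2) (q ^ 2) n) * ζ ^ n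
      = 1 + ζ / ((1 - ζ) * (1 + q ^ 2)) * univR ζ (-q ^ 2) (q ^ 2) := by
  set Q : ℂ := q ^ 2 with hQdef
  have hQn : ‖Q‖ < 1 := by
    rw [hQdef, norm_pow]
    nlinarith
  have hQnn : (0:ℝ) ≤ ‖Q‖ := norm_nonneg _
  -- basic nonvanishing facts
  have hQpow : ∀ j : ℕ, ‖Q ^ (j + 1)‖ < 1 := by
    intro j
    rw [norm_pow]
    calc ‖Q‖ ^ (j + 1) ≤ ‖Q‖ := pow_le_of_le_one hQnn hQn.le (Nat.succ_ne_zero j)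
      _ < 1 := hQn
  have hPq : ∀ m : ℕ, qPoch Q Q m ≠ 0 := by
    intro m
    apply qPoch_ne_zero
    intro j
    have : Q * Q ^ j = Q ^ (j + 1) := by rw [pow_succ]; ring
    rw [this]
    exact one_sub_ne (hQpow j)
  have hPnq : ∀ m : ℕ, qPoch (-Q) Q m ≠ 0 := by
    intro m
    apply qPoch_ne_zero
    intro j
    have : (1:ℂ) - (-Q) * Q ^ j = 1 - (-(Q ^ (j+1))) := by rw [pow_succ]; ring
    rw [this]
    exact one_sub_ne (by rw [norm_neg]; exact hQpow j)
  have hζQ : ∀ j : ℕ, 1 - ζ * Q ^ j ≠ 0 := by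
    intro j
    rw [sub_ne_zero, hQdef, ← pow_mul]
    exact fun h => hζq j h.symm
  -- step 0 : simplify LHS termwise
  have lhs_eq : ∀ m : ℕ, qPoch Q Q m / (qPoch (-Q) Q m * qPoch Q Q m) * ζ ^ m
      = ζ ^ m / qPoch (-Q) Q m := by
    intro m
    rw [mul_comm (qPoch (-Q) Q m), div_mul_cancel_left₀ (hPq m), inv_mul_eq_div]
  rw [tsum_congr lhs_eq]
  -- the double-indexed family
  set x : ℝ := ‖ζ‖ with hx
  have hx0 : 0 ≤ x := norm_nonneg _
  set c : ℕ → ℂ := fun n => (-1) ^ n * Q ^ (n * (n + 1)) / qPoch (-Q) Q (n + 1) with hc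
  set t : ℕ → ℕ → ℂ := fun n m => c n * (gb Q m n * ζ ^ (m + 1)) with ht
  have Ht : ∀ n : ℕ, HasSum (t n) (c n * (ζ ^ (n + 1) / qPoch ζ Q (n + 1))) :=
    fun n => (hasSum_gb Q ζ hQn.le hζ hζQ n).mul_left (c n)
  -- summability of the double family
  have hcbound : ∀ n : ℕ, ‖c n‖ ≤ ‖Q‖ ^ (n * (n + 1)) / (1 - ‖Q‖) ^ (n + 1) := by
    intro n
    rw [hc]
    simp only [norm_div, norm_mul, norm_pow, norm_neg, norm_one, one_pow, one_mul]
    have h1R : (0:ℝ) < 1 - ‖Q‖ := by linarith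
    apply div_le_div_of_nonneg_left (by positivity) (by positivity)
    exact norm_qPoch_ge (-Q) Q (n+1) ‖Q‖ (fun j => by
        have hj : ‖Q ^ j‖ ≤ 1 := by
          rw [norm_pow]; exact pow_le_one₀ hQnn hQn.le
        calc ‖-Q * Q ^ j‖ = ‖Q‖ * ‖Q ^ j‖ := by rw [norm_mul, norm_neg]
          _ ≤ ‖Q‖ * 1 := mul_le_mul_of_nonneg_left hj hQnn
          _ = ‖Q‖ := mul_one _) hQn.le
  -- majorant for the ratio test
  have hxlt : x < 1 := hζ
  have h1x : (0:ℝ) < 1 - x := by linarith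
  have h1R : (0:ℝ) < 1 - ‖Q‖ := by linarith
  set u : ℕ → ℝ := fun n =>
    ‖Q‖ ^ (n * (n + 1)) / (1 - ‖Q‖) ^ (n + 1) * (x ^ (n + 1) / (1 - x) ^ (n + 1)) with hu
  have hu_nonneg : ∀ n, 0 ≤ u n := fun n => by rw [hu]; positivity
  have hurec : ∀ n : ℕ, u (n + 1) = u n * (‖Q‖ ^ (2 * n + 2) * (x / ((1 - ‖Q‖) * (1 - x)))) := by
    intro n
    rw [hu]
    simp only
    rw [show (n+1) * (n+1+1) = n * (n+1) + (2*n+2) by ring, pow_add,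
      pow_succ (1 - ‖Q‖) (n+1), pow_succ x (n+1), pow_succ (1-x) (n+1)]
    field_simp
  have hu_summ : Summable u := by
    apply summable_of_ratio_norm_eventually_le (r := 1/2) (by norm_num)
    have htend : Filter.Tendsto (fun n : ℕ => ‖Q‖ ^ n * (x / ((1 - ‖Q‖) * (1 - x))))
        Filter.atTop (nhds 0) := by
      simpa using (tendsto_pow_atTop_nhds_zero_of_lt_one hQnn hQn).mul_const _
    have hev := htend.eventually_le_const (show (0:ℝ) < 1/2 by norm_num)
    filter_upwards [hev] with n hn
    rw [Real.norm_eq_abs, Real.norm_eq_abs, _root_.abs_of_nonneg (hu_nonneg _),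
      _root_.abs_of_nonneg (hu_nonneg _), hurec n]
    have hKnn : (0:ℝ) ≤ x / ((1 - ‖Q‖) * (1 - x)) := by positivity
    have hple : ‖Q‖ ^ (2*n+2) ≤ ‖Q‖ ^ n := pow_le_pow_of_le_one hQnn hQn.le (by omega)
    calc u n * (‖Q‖ ^ (2*n+2) * (x / ((1 - ‖Q‖) * (1 - x))))
        ≤ u n * (‖Q‖ ^ n * (x / ((1 - ‖Q‖) * (1 - x)))) := by
          apply mul_le_mul_of_nonneg_left _ (hu_nonneg n)
          exact mul_le_mul_of_nonneg_right hple hKnn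
      _ ≤ u n * (1/2) := mul_le_mul_of_nonneg_left hn (hu_nonneg n)
      _ = 1/2 * u n := by ring
  -- termwise norm bound
  have hterm : ∀ n m : ℕ, ‖t n m‖ ≤ ‖c n‖ * ((m.choose n : ℝ) * x ^ (m + 1)) := by
    intro n m
    rw [ht]
    simp only
    rw [norm_mul, norm_mul]
    apply mul_le_mul_of_nonneg_left _ (norm_nonneg _)
    have : ‖ζ ^ (m+1)‖ = x ^ (m+1) := by rw [norm_pow]
    rw [this]
    exact mul_le_mul_of_nonneg_right (norm_gb_le_choose Q hQn.le m n) (by positivity)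
  have hslice : ∀ n : ℕ, Summable fun m => ‖c n‖ * ((m.choose n : ℝ) * x ^ (m + 1)) :=
    fun n => ((hasSum_choose x hx0 hxlt n).summable).mul_left _
  have hslice' : ∀ n : ℕ, Summable fun m => ‖t n m‖ := fun n =>
    Summable.of_nonneg_of_le (fun m => norm_nonneg _) (hterm n) (hslice n)
  have htsum_le : ∀ n : ℕ, ∑' m, ‖t n m‖ ≤ u n := by
    intro n
    calc ∑' m, ‖t n m‖ ≤ ∑' m, ‖c n‖ * ((m.choose n : ℝ) * x ^ (m + 1)) :=
          Summable.tsum_le_tsum (hterm n) (hslice' n) (hslice n)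
      _ = ‖c n‖ * (x ^ (n+1) / (1 - x) ^ (n+1)) := by
          rw [tsum_mul_left, (hasSum_choose x hx0 hxlt n).tsum_eq]
      _ ≤ ‖Q‖ ^ (n * (n + 1)) / (1 - ‖Q‖) ^ (n + 1) * (x ^ (n+1) / (1 - x) ^ (n+1)) :=
          mul_le_mul_of_nonneg_right (hcbound n) (by positivity)
      _ = u n := by rw [hu]
  have hF : Summable fun p : ℕ × ℕ => ‖t p.1 p.2‖ := by
    apply (summable_prod_of_nonneg (fun p => norm_nonneg _)).mpr
    refine ⟨fun n => hslice' n, ?_⟩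
    exact Summable.of_nonneg_of_le (fun n => tsum_nonneg fun m => norm_nonneg _)
      htsum_le hu_summ
  have hf : Summable fun p : ℕ × ℕ => t p.1 p.2 := Summable.of_norm hF
  -- inner sums
  have h_inner : ∀ m : ℕ, ∑' n, t n m = ζ ^ (m + 1) / qPoch (-Q) Q (m + 1) := by
    intro m
    have hvan : ∀ n ∉ Finset.range (m + 1), t n m = 0 := by
      intro n hn
      rw [Finset.mem_range] at hn
      rw [ht]
      simp only
      rw [gb_eq_zero Q m n (by omega)]
      ring
    rw [tsum_eq_sum hvan]
    have hb' : ∀ k : ℕ, qPoch ((-1) * Q) Q k ≠ 0 := by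
      intro k; rw [neg_one_mul]; exact hPnq k
    have hdiv := finite_identity_div Q (-1) hb' m
    rw [neg_one_mul] at hdiv
    have hstep : ∀ n ∈ Finset.range (m + 1), t n m
        = ζ ^ (m+1) * ((-1) ^ n * Q ^ (n * (n + 1)) * gb Q m n / qPoch (-Q) Q (n + 1)) := by
      intro n _
      rw [ht, hc]
      simp only
      ring
    rw [Finset.sum_congr rfl hstep, ← Finset.mul_sum, hdiv]
    rw [mul_one_div]
  -- outer summability and the main computation
  have hOuter : Summable fun m => ∑' n, t n m := by
    have h1 := (hf.prod_symm).prod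
    apply h1.congr
    intro m
    rfl
  have hL1 : Summable fun m => ζ ^ (m + 1) / qPoch (-Q) Q (m + 1) :=
    hOuter.congr h_inner
  have hL : Summable fun m => ζ ^ m / qPoch (-Q) Q m := (summable_nat_add_iff 1).mp hL1
  have hcomm : ∑' (m : ℕ) (n : ℕ), t n m = ∑' (n : ℕ) (m : ℕ), t n m := by
    apply Summable.tsum_comm
    exact hf
  -- claim 2 : identification with univR terms
  have h1ζ : (1:ℂ) - ζ ≠ 0 := sub_ne_zero.mpr (Ne.symm hζ1)
  have h1Q : (1:ℂ) + Q ≠ 0 := by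
    have := one_sub_ne (w := -Q) (by rw [norm_neg]; exact hQn)
    rwa [sub_neg_eq_add] at this
  have hA : ∀ n : ℕ, qPoch (ζ * Q) Q n ≠ 0 := by
    intro n
    apply qPoch_ne_zero
    intro j
    have e : ζ * Q * Q ^ j = ζ * Q ^ (j + 1) := by rw [pow_succ]; ring
    rw [e]
    exact hζQ (j + 1)
  have hB : ∀ n : ℕ, qPoch (-Q * Q) Q n ≠ 0 := by
    intro n
    apply qPoch_ne_zero
    intro j
    have e : (1:ℂ) - -Q * Q * Q ^ j = 1 - -(Q ^ (j + 2)) := by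
      rw [show j + 2 = j + 1 + 1 from rfl, pow_succ, pow_succ]; ring
    rw [e]
    exact one_sub_ne (by rw [norm_neg]; exact hQpow (j + 1))
  have claim2 : ∀ n : ℕ, c n * (ζ ^ (n + 1) / qPoch ζ Q (n + 1))
      = ζ / ((1 - ζ) * (1 + Q)) *
          ((ζ * -Q) ^ n * Q ^ (n ^ 2) / (qPoch (ζ * Q) Q n * qPoch (-Q * Q) Q n)) := by
    intro n
    have e1 : qPoch ζ Q (n + 1) = (1 - ζ) * qPoch (ζ * Q) Q n := qPoch_succ' ζ Q n
    have e2 : qPoch (-Q) Q (n + 1) = (1 + Q) * qPoch (-Q * Q) Q n := by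
      rw [qPoch_succ' (-Q) Q n, sub_neg_eq_add]
    rw [hc]
    simp only
    rw [e1, e2]
    field_simp
    ring
  -- finish
  calc ∑' m, ζ ^ m / qPoch (-Q) Q m
      = ζ ^ 0 / qPoch (-Q) Q 0 + ∑' m, ζ ^ (m + 1) / qPoch (-Q) Q (m + 1) :=
        Summable.tsum_eq_zero_add hL
    _ = 1 + ∑' (m : ℕ) (n : ℕ), t n m := by
        rw [pow_zero, qPoch_zero, div_one, tsum_congr fun m => (h_inner m).symm]
    _ = 1 + ∑' (n : ℕ) (m : ℕ), t n m := by rw [hcomm]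
    _ = 1 + ∑' n, c n * (ζ ^ (n + 1) / qPoch ζ Q (n + 1)) := by
        rw [tsum_congr fun n => (Ht n).tsum_eq]
    _ = 1 + ∑' n, ζ / ((1 - ζ) * (1 + Q)) *
          ((ζ * -Q) ^ n * Q ^ (n ^ 2) / (qPoch (ζ * Q) Q n * qPoch (-Q * Q) Q n)) := by
        rw [tsum_congr claim2]
    _ = 1 + ζ / ((1 - ζ) * (1 + Q)) * univR ζ (-Q) Q := by
        rw [tsum_mul_left, univR]
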